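/- arXiv:2604.03566 — 2 statements merged into one kernel-verified Lean document; each statement's English description precedes it below -/
import Mathlib

section
/- Let d ≥ 1, let Σ₁, …, Σ_n be symmetric positive definite d×d real matrices and λ₁, …, λ_n real weights with Σ_{k=1}^n λ_k = 1, and suppose a symmetric positive definite matrix S* satisfies the stationarity equation S* = Σ_{k=1}^n λ_k (S*^{1/2} Σ_k S*^{1/2})^{1/2}. Then S* is not a local maximum of F on the set of symmetric positive definite matrices: for every ε > 0 there exists a symmetric positive definite matrix S with ‖S − S*‖ < ε and F(S) > F(S*). -/
open Matrix BigOperators Finset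
open scoped Classical
open scoped MatrixOrder

/-- Unique positive semidefinite square root of a positive semidefinite matrix
(and junk value `0` on other matrices). -/
noncomputable def msqrt {d : ℕ} (M : Matrix (Fin d) (Fin d) ℝ) :
    Matrix (Fin d) (Fin d) ℝ :=
  if h : M.PosSemidef then
    h.1.eigenvectorUnitary.1 * diagonal ((↑) ∘ (√·) ∘ h.1.eigenvalues) *
      (star h.1.eigenvectorUnitary : Matrix (Fin d) (Fin d) ℝ)
  else 0

lemma posSemidef_smul {d : ℕ} {M : Matrix (Fin d) (Fin d) ℝ} (hM : M.PosSemidef)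
    {c : ℝ} (hc : 0 ≤ c) : (c • M).PosSemidef := by
  have hH : (c • M).IsHermitian := by
    unfold Matrix.IsHermitian; rw [conjTranspose_smul, hM.1.eq]; simp
  exact hM.smul hc

lemma posDef_smul {d : ℕ} {M : Matrix (Fin d) (Fin d) ℝ} (hM : M.PosDef)
    {c : ℝ} (hc : 0 < c) : (c • M).PosDef := by
  have hH : (c • M).IsHermitian := by
    unfold Matrix.IsHermitian; rw [conjTranspose_smul, hM.1.eq]; simp
  exact hM.smul hc

lemma msqrt_of_psd {d : ℕ} {M : Matrix (Fin d) (Fin d) ℝ} (hM : M.PosSemidef) :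
    msqrt M = cfc Real.sqrt M := by
  rw [hM.1.cfc_eq, IsHermitian.cfc, msqrt, dif_pos hM]
  simp <;> rfl

lemma msqrt_psd {d : ℕ} {M : Matrix (Fin d) (Fin d) ℝ} (hM : M.PosSemidef) :
    (msqrt M).PosSemidef := by
  rw [msqrt_of_psd hM]
  exact Matrix.nonneg_iff_posSemidef.mp (cfc_nonneg (fun x _ => Real.sqrt_nonneg x))

lemma msqrt_smul {d : ℕ} {M : Matrix (Fin d) (Fin d) ℝ} (hM : M.PosSemidef)
    {c : ℝ} (hc : 0 ≤ c) : msqrt (c • M) = Real.sqrt c • msqrt M := by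
  have hcM : (c • M).PosSemidef := posSemidef_smul hM hc
  rw [msqrt_of_psd hcM, msqrt_of_psd hM, ← cfc_comp_smul c Real.sqrt M,
    ← cfc_smul (Real.sqrt c) Real.sqrt M]
  simp only [smul_eq_mul, Real.sqrt_mul hc]

/-- Smallest eigenvalue of a symmetric matrix (junk value `0` otherwise). -/
noncomputable def lmin {d : ℕ} (M : Matrix (Fin d) (Fin d) ℝ) : ℝ :=
  if h : M.IsHermitian then ⨅ i, h.eigenvalues i else 0

/-- Largest eigenvalue of a symmetric matrix (junk value `0` otherwise). -/
noncomputable def lmax {d : ℕ} (M : Matrix (Fin d) (Fin d) ℝ) : ℝ :=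
  if h : M.IsHermitian then ⨆ i, h.eigenvalues i else 0

/-- Squared Bures–Wasserstein distance. -/
noncomputable def W2sq {d : ℕ} (A B : Matrix (Fin d) (Fin d) ℝ) : ℝ :=
  A.trace + B.trace - 2 * (msqrt (msqrt A * B * msqrt A)).trace

/-- The conditional barycenter objective `F`. -/
noncomputable def Fobj {d n : ℕ} (Sig : Fin n → Matrix (Fin d) (Fin d) ℝ)
    (lam : Fin n → ℝ) (S : Matrix (Fin d) (Fin d) ℝ) : ℝ :=
  ∑ k, lam k * W2sq S (Sig k)

/-- Geometric mean `GM(S⁻¹, Σ) = S^{-1/2} (S^{1/2} Σ S^{1/2})^{1/2} S^{-1/2}`. -/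
noncomputable def GMinv {d : ℕ} (S Sigma : Matrix (Fin d) (Fin d) ℝ) :
    Matrix (Fin d) (Fin d) ℝ :=
  (msqrt S)⁻¹ * msqrt (msqrt S * Sigma * msqrt S) * (msqrt S)⁻¹

/-- The Spectral Dominance of Positive Weights condition. -/
def SDPW {d n : ℕ} (Sig : Fin n → Matrix (Fin d) (Fin d) ℝ) (lam : Fin n → ℝ) : Prop :=
  ∑ j ∈ Finset.univ.filter (fun k => lam k < 0), (-lam j) * Real.sqrt (lmax (Sig j))
    < ∑ i ∈ Finset.univ.filter (fun k => 0 < lam k), lam i * Real.sqrt (lmin (Sig i))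

/-- a stationary point of `F` is never a local maximum: arbitrarily close
(in Frobenius norm) to `S*` there are positive definite matrices with strictly larger
objective value. -/
theorem stmt8 {d n : ℕ} (hd : 1 ≤ d) (Sig : Fin n → Matrix (Fin d) (Fin d) ℝ)
    (lam : Fin n → ℝ) (hSig : ∀ k, (Sig k).PosDef) (hsum : ∑ k, lam k = 1)
    (Sstar : Matrix (Fin d) (Fin d) ℝ) (hSstar : Sstar.PosDef)
    (hstat : Sstar = ∑ k, lam k • msqrt (msqrt Sstar * Sig k * msqrt Sstar)) :
    ∀ ε : ℝ, 0 < ε → ∃ S : Matrix (Fin d) (Fin d) ℝ, S.PosDef ∧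
      Real.sqrt (∑ i, ∑ j, (S i j - Sstar i j) ^ 2) < ε ∧
      Fobj Sig lam Sstar < Fobj Sig lam S := by
  intro ε hε
  set R := msqrt Sstar with hRdef
  have hSpsd := hSstar.posSemidef
  have hR : R.PosSemidef := by rw [hRdef]; exact msqrt_psd hSpsd
  have hInner : ∀ k, (R * Sig k * R).PosSemidef := fun k => by
    have := (hSig k).posSemidef.mul_mul_conjTranspose_same R
    rwa [hR.1.eq] at this
  have htr : Sstar.trace = ∑ k, lam k * (msqrt (R * Sig k * R)).trace := by
    have := congrArg Matrix.trace hstat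
    simpa only [trace_sum, trace_smul, smul_eq_mul] using this
  have ha : 0 < Sstar.trace := by
    rw [Matrix.trace]
    have : Nonempty (Fin d) := ⟨⟨0, hd⟩⟩
    apply Finset.sum_pos
    · intro i _
      have hx : (Pi.single i 1 : Fin d → ℝ) ≠ 0 := by
        intro h; simpa using congrFun h i
      exact hSstar.diag_pos
    · exact Finset.univ_nonempty
  set N : ℝ := Real.sqrt (∑ i, ∑ j, Sstar i j ^ 2) with hN
  have hN0 : 0 ≤ N := Real.sqrt_nonneg _
  obtain ⟨t, ht1, htdist⟩ : ∃ t : ℝ, 1 < t ∧ (t - 1) * N < ε := by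
    have hdp : 0 < ε / (N + 1) := div_pos hε (by linarith)
    refine ⟨1 + ε / (N + 1), by linarith, ?_⟩
    have h1 : (1 + ε / (N + 1)) - 1 = ε / (N + 1) := by ring
    rw [h1, div_mul_eq_mul_div, div_lt_iff₀ (by linarith)]
    nlinarith
  have ht0 : (0:ℝ) < t := by linarith
  refine ⟨t • Sstar, posDef_smul hSstar ht0, ?_, ?_⟩
  · have h1 : ∀ i j, ((t • Sstar) i j - Sstar i j) ^ 2 = (t - 1) ^ 2 * Sstar i j ^ 2 := by
      intro i j; simp only [Matrix.smul_apply, smul_eq_mul]; ring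
    simp_rw [h1, ← Finset.mul_sum]
    rwa [Real.sqrt_mul (by positivity), Real.sqrt_sq (by linarith), ← hN]
  · have hsq : msqrt (t • Sstar) = Real.sqrt t • R := by
      rw [msqrt_smul hSpsd ht0.le, hRdef]
    have hWt : ∀ k, W2sq (t • Sstar) (Sig k)
        = t * Sstar.trace + (Sig k).trace
          - 2 * (Real.sqrt t * (msqrt (R * Sig k * R)).trace) := by
      intro k
      have hmul : msqrt (t • Sstar) * Sig k * msqrt (t • Sstar)
          = t • (R * Sig k * R) := by
        rw [hsq, smul_mul_assoc, mul_smul_comm, smul_mul_assoc, smul_smul,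
          Real.mul_self_sqrt ht0.le]
      rw [W2sq, hmul, msqrt_smul (hInner k) ht0.le, trace_smul, trace_smul]
      simp [smul_eq_mul]
    have hW1 : ∀ k, W2sq Sstar (Sig k)
        = Sstar.trace + (Sig k).trace - 2 * (msqrt (R * Sig k * R)).trace := by
      intro k; rw [W2sq, ← hRdef]
    have hst : Real.sqrt t ^ 2 = t := Real.sq_sqrt ht0.le
    have key : Fobj Sig lam (t • Sstar) - Fobj Sig lam Sstar
        = (t - 1) * Sstar.trace * (∑ k, lam k)
          - 2 * (Real.sqrt t - 1) * (∑ k, lam k * (msqrt (R * Sig k * R)).trace) := by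
      rw [Fobj, Fobj, ← Finset.sum_sub_distrib, Finset.mul_sum, Finset.mul_sum,
        ← Finset.sum_sub_distrib]
      refine Finset.sum_congr rfl fun k _ => ?_
      rw [hWt k, hW1 k]; ring
    have key2 : Fobj Sig lam (t • Sstar) - Fobj Sig lam Sstar
        = Sstar.trace * (Real.sqrt t - 1) ^ 2 := by
      rw [key, hsum, ← htr]; linear_combination (-Sstar.trace) * hst
    have hsqrt1 : 1 < Real.sqrt t := by
      have := Real.sqrt_lt_sqrt (by norm_num : (0:ℝ) ≤ 1) ht1
      simpa using this
    have hpos : 0 < Sstar.trace * (Real.sqrt t - 1) ^ 2 :=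
      mul_pos ha (pow_pos (by linarith) 2)
    linarith [key2]
end

section
/- Let Σ₁, …, Σ_n be symmetric positive definite d×d real matrices and λ₁, …, λ_n real weights with Σ_{k=1}^n λ_k = 1, with both I and J nonempty. Set μ₊ = Σ_{i∈I} λ_i⁺ and μ₋ = Σ_{j∈J} λ_j⁻, and assume μ₊ · min_{i∈I} √λ_min(Σ_i) > μ₋ · max_{j∈J} √λ_max(Σ_j). Then for every symmetric positive definite d×d matrix S, every i ∈ I and every j ∈ J, the matrix μ₊ · GM(S^{-1}, Σ_i) − μ₋ · GM(S^{-1}, Σ_j) is symmetric positive definite. -/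
open Matrix BigOperators Finset
open scoped Classical

section SqrtAPI
open scoped MatrixOrder

/-- Local replacement for the removed `Matrix.PosSemidef.sqrt`. -/
noncomputable def Matrix.PosSemidef.sqrt {d : ℕ} {A : Matrix (Fin d) (Fin d) ℝ}
    (_ : A.PosSemidef) : Matrix (Fin d) (Fin d) ℝ :=
  CFC.sqrt A

lemma Matrix.PosSemidef.posSemidef_sqrt {d : ℕ} {A : Matrix (Fin d) (Fin d) ℝ}
    (hA : A.PosSemidef) : hA.sqrt.PosSemidef :=
  (CFC.sqrt_nonneg A).posSemidef

lemma Matrix.PosSemidef.sqrt_mul_self {d : ℕ} {A : Matrix (Fin d) (Fin d) ℝ}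
    (hA : A.PosSemidef) : hA.sqrt * hA.sqrt = A :=
  CFC.sqrt_mul_sqrt_self A hA.nonneg

lemma Matrix.PosSemidef.sq_sqrt {d : ℕ} {A : Matrix (Fin d) (Fin d) ℝ}
    (hA : A.PosSemidef) : hA.sqrt ^ 2 = A := by
  rw [sq]; exact hA.sqrt_mul_self

lemma Matrix.PosSemidef.eq_sqrt_of_sq_eq {d : ℕ} {A B : Matrix (Fin d) (Fin d) ℝ}
    (hA : A.PosSemidef) (hB : B.PosSemidef) (h : A ^ 2 = B) : A = hB.sqrt :=
  (CFC.sqrt_unique (a := B) (b := A) (by rw [← sq]; exact h) hA.nonneg).symm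

lemma msqrt_eq_cfc {d : ℕ} {M : Matrix (Fin d) (Fin d) ℝ} (hM : M.PosSemidef) :
    msqrt M = hM.sqrt := by
  rw [msqrt, dif_pos hM, Matrix.PosSemidef.sqrt, CFC.sqrt_eq_cfc, cfc_nnreal_eq_real _ M,
    hM.1.cfc_eq]
  simp only [IsHermitian.cfc, Unitary.conjStarAlgAut_apply, Real.coe_sqrt, Real.coe_toNNReal']
  congr 3
  funext k
  simp only [Function.comp_apply, RCLike.ofReal_real_eq_id, id,
    max_eq_left (hM.eigenvalues_nonneg k)]

end SqrtAPI

section Aux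
variable {d : ℕ} {A B S : Matrix (Fin d) (Fin d) ℝ} {c : ℝ}

variable {d : ℕ} {A B S : Matrix (Fin d) (Fin d) ℝ} {c : ℝ}

lemma psd_smul (hc : 0 ≤ c) (hA : A.PosSemidef) : (c • A).PosSemidef := by
  exact hA.smul hc

lemma pd_smul (hc : 0 < c) (hA : A.PosDef) : (c • A).PosDef := by
  exact hA.smul hc

lemma conj_psd (hA : A.PosSemidef) (hB : B.IsHermitian) : (B * A * B).PosSemidef := by
  have := hA.mul_mul_conjTranspose_same B
  rwa [hB.eq] at this

lemma posDef_of_sq (hX : A.PosSemidef) (hS : (A * A).PosDef) : A.PosDef := by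
  refine PosDef.of_dotProduct_mulVec_pos hX.1 fun x hx => (hX.dotProduct_mulVec_nonneg x).lt_of_ne' fun h => ?_
  have hx0 : A *ᵥ x = 0 := (hX.dotProduct_mulVec_zero_iff x).mp h
  have := hS.dotProduct_mulVec_pos hx
  rw [← mulVec_mulVec, hx0, mulVec_zero, dotProduct_zero] at this
  exact lt_irrefl 0 this

lemma herm_spec (hA : A.IsHermitian) {v : Fin d → ℝ} (hv : v ≠ 0) {μ : ℝ}
    (h : A *ᵥ v = μ • v) : ∃ j, hA.eigenvalues j = μ := by
  have hμ : μ ∈ spectrum ℝ A := by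
    rw [← AlgEquiv.spectrum_eq (Matrix.toLinAlgEquiv' : Matrix (Fin d) (Fin d) ℝ ≃ₐ[ℝ] _) A,
      ← Module.End.hasEigenvalue_iff_mem_spectrum]
    refine Module.End.hasEigenvalue_of_hasEigenvector
      ⟨Module.End.mem_eigenspace_iff.mpr ?_, hv⟩
    simpa [Matrix.toLinAlgEquiv'_apply, Matrix.toLin'_apply] using h
  rw [hA.spectrum_real_eq_range_eigenvalues] at hμ
  exact hμ

/-- sqrt monotonicity -/
lemma sqrt_mono (hA : A.PosSemidef) (hB : B.PosSemidef) (h : (B - A).PosSemidef) :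
    (hB.sqrt - hA.sqrt).PosSemidef := by
  set X := hB.sqrt with hXdef
  set Y := hA.sqrt with hYdef
  have hX : X.PosSemidef := hB.posSemidef_sqrt
  have hY : Y.PosSemidef := hA.posSemidef_sqrt
  have hD : (X - Y).IsHermitian := hX.1.sub hY.1
  apply hD.posSemidef_iff_eigenvalues_nonneg.mpr
  intro i
  by_contra hlt
  push_neg at hlt
  set t := hD.eigenvalues i with ht
  set v : Fin d → ℝ := ⇑(hD.eigenvectorBasis i) with hvdef
  have hv : (X - Y) *ᵥ v = t • v := hD.mulVec_eigenvectorBasis i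
  have hv0 : v ≠ 0 := by
    intro hz
    exact hD.eigenvectorBasis.orthonormal.ne_zero i (by ext x; exact congrFun hz x)
  have hs1 : 0 ≤ v ⬝ᵥ X *ᵥ v := by simpa using hX.dotProduct_mulVec_nonneg v
  have hs2 : 0 ≤ v ⬝ᵥ Y *ᵥ v := by simpa using hY.dotProduct_mulVec_nonneg v
  have key : v ⬝ᵥ (B - A) *ᵥ v = t * (v ⬝ᵥ X *ᵥ v + v ⬝ᵥ Y *ᵥ v) := by
    have hBA : B - A = X * (X - Y) + (X - Y) * Y := by
      rw [mul_sub, sub_mul, hXdef, hYdef, hB.sqrt_mul_self, hA.sqrt_mul_self]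
      abel
    rw [hBA, add_mulVec, dotProduct_add]
    have e1 : v ⬝ᵥ (X * (X - Y)) *ᵥ v = t * (v ⬝ᵥ X *ᵥ v) := by
      rw [← mulVec_mulVec, hv, mulVec_smul, dotProduct_smul, smul_eq_mul]
    have e2 : v ⬝ᵥ ((X - Y) * Y) *ᵥ v = t * (v ⬝ᵥ Y *ᵥ v) := by
      rw [← mulVec_mulVec, dotProduct_mulVec v (X - Y), ← mulVec_transpose]
      have : (X - Y)ᵀ = X - Y := by
        have := hD.eq; rwa [conjTranspose_eq_transpose_of_trivial] at this
      rw [this, hv]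
      simp [smul_dotProduct, smul_eq_mul]
    rw [e1, e2, mul_add]
  have h0 : 0 ≤ t * (v ⬝ᵥ X *ᵥ v + v ⬝ᵥ Y *ᵥ v) := by
    rw [← key]; simpa using h.dotProduct_mulVec_nonneg v
  have hsum0 : v ⬝ᵥ X *ᵥ v + v ⬝ᵥ Y *ᵥ v = 0 := by
    have hle : v ⬝ᵥ X *ᵥ v + v ⬝ᵥ Y *ᵥ v ≤ 0 := by
      by_contra hpos
      push_neg at hpos
      exact absurd h0 (not_le.mpr (mul_neg_of_neg_of_pos hlt hpos))
    linarith [add_nonneg hs1 hs2]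
  have hX0 : X *ᵥ v = 0 := by
    have : v ⬝ᵥ X *ᵥ v = 0 := by linarith
    have := (hX.dotProduct_mulVec_zero_iff v).mp (by simpa using this)
    simpa using this
  have hY0 : Y *ᵥ v = 0 := by
    have : v ⬝ᵥ Y *ᵥ v = 0 := by linarith
    have := (hY.dotProduct_mulVec_zero_iff v).mp (by simpa using this)
    simpa using this
  have : t • v = 0 := by rw [← hv, sub_mulVec, hX0, hY0, sub_zero]
  rcases smul_eq_zero.mp this with h' | h'
  · exact absurd h' hlt.ne
  · exact hv0 h'


lemma loewner_lower (hA : A.IsHermitian) (hc : ∀ i, c ≤ hA.eigenvalues i) :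
    (A - c • (1 : Matrix (Fin d) (Fin d) ℝ)).PosSemidef := by
  have h1 : ((c : ℝ) • (1 : Matrix (Fin d) (Fin d) ℝ)).IsHermitian := by
    unfold Matrix.IsHermitian
    rw [conjTranspose_smul, conjTranspose_one]
    simp
  have hD : (A - c • (1 : Matrix (Fin d) (Fin d) ℝ)).IsHermitian := hA.sub h1
  apply hD.posSemidef_iff_eigenvalues_nonneg.mpr
  intro i
  set s := hD.eigenvalues i with hs
  set v : Fin d → ℝ := ⇑(hD.eigenvectorBasis i) with hvdef
  have hv : (A - c • (1 : Matrix (Fin d) (Fin d) ℝ)) *ᵥ v = s • v := hD.mulVec_eigenvectorBasis i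
  have hv0 : v ≠ 0 := fun hz =>
    hD.eigenvectorBasis.orthonormal.ne_zero i (by ext x; exact congrFun hz x)
  have hAv : A *ᵥ v = (s + c) • v := by
    have : A *ᵥ v - c • v = s • v := by
      rw [← hv, sub_mulVec, smul_mulVec, one_mulVec]
    have h2 := congrArg (· + c • v) this
    simp only [sub_add_cancel] at h2
    rw [h2, add_smul, add_comm]
  obtain ⟨k, hk⟩ := herm_spec hA hv0 hAv
  have := hc k
  rw [hk] at this
  simp only [Pi.zero_apply]
  linarith

lemma loewner_upper (hA : A.IsHermitian) (hc : ∀ i, hA.eigenvalues i ≤ c) :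
    (c • (1 : Matrix (Fin d) (Fin d) ℝ) - A).PosSemidef := by
  have h1 : ((c : ℝ) • (1 : Matrix (Fin d) (Fin d) ℝ)).IsHermitian := by
    unfold Matrix.IsHermitian
    rw [conjTranspose_smul, conjTranspose_one]
    simp
  have hD : (c • (1 : Matrix (Fin d) (Fin d) ℝ) - A).IsHermitian := h1.sub hA
  apply hD.posSemidef_iff_eigenvalues_nonneg.mpr
  intro i
  set s := hD.eigenvalues i with hs
  set v : Fin d → ℝ := ⇑(hD.eigenvectorBasis i) with hvdef
  have hv : (c • (1 : Matrix (Fin d) (Fin d) ℝ) - A) *ᵥ v = s • v := hD.mulVec_eigenvectorBasis i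
  have hv0 : v ≠ 0 := fun hz =>
    hD.eigenvectorBasis.orthonormal.ne_zero i (by ext x; exact congrFun hz x)
  have hAv : A *ᵥ v = (c - s) • v := by
    have : c • v - A *ᵥ v = s • v := by
      rw [← hv, sub_mulVec, smul_mulVec, one_mulVec]
    have h2 : A *ᵥ v = c • v - s • v := by
      rw [← this]; abel
    rw [h2, sub_smul]
  obtain ⟨k, hk⟩ := herm_spec hA hv0 hAv
  have := hc k
  rw [hk] at this
  simp only [Pi.zero_apply]
  linarith


variable {M Sigma : Matrix (Fin d) (Fin d) ℝ}

lemma msqrt_eq (hM : M.PosSemidef) : msqrt M = hM.sqrt := msqrt_eq_cfc hM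

lemma msqrt_smul_s12 (hc : 0 ≤ c) (hS : S.PosSemidef) :
    msqrt (c • S) = Real.sqrt c • msqrt S := by
  rw [msqrt_eq hS, msqrt_eq (psd_smul hc hS)]
  refine ((psd_smul (Real.sqrt_nonneg c) hS.posSemidef_sqrt).eq_sqrt_of_sq_eq
    (psd_smul hc hS) ?_).symm
  rw [smul_pow, hS.sq_sqrt, Real.sq_sqrt hc]

lemma lmin_le (hA : A.IsHermitian) (i : Fin d) : lmin A ≤ hA.eigenvalues i := by
  rw [lmin, dif_pos hA]
  exact ciInf_le (Set.Finite.bddBelow (Set.finite_range _)) i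

lemma le_lmax (hA : A.IsHermitian) (i : Fin d) : hA.eigenvalues i ≤ lmax A := by
  rw [lmax, dif_pos hA]
  exact le_ciSup (Set.Finite.bddAbove (Set.finite_range _)) i

lemma lmin_nonneg (hA : A.PosSemidef) : 0 ≤ lmin A := by
  rw [lmin, dif_pos hA.1]
  rcases isEmpty_or_nonempty (Fin d) with h | h
  · simp [Real.iInf_of_isEmpty]
  · exact le_ciInf fun i => hA.eigenvalues_nonneg i

lemma lmax_nonneg (hA : A.PosSemidef) : 0 ≤ lmax A := by
  rw [lmax, dif_pos hA.1]
  rcases isEmpty_or_nonempty (Fin d) with h | h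
  · simp [Real.iSup_of_isEmpty]
  · exact le_trans (hA.eigenvalues_nonneg (Classical.arbitrary _))
      (le_ciSup (Set.Finite.bddAbove (Set.finite_range _)) _)

lemma msqrt_posDef (hS : S.PosDef) : (msqrt S).PosDef := by
  rw [msqrt_eq hS.posSemidef]
  refine posDef_of_sq hS.posSemidef.posSemidef_sqrt ?_
  rwa [hS.posSemidef.sqrt_mul_self]

lemma GM_lower (hS : S.PosDef) (hSg : Sigma.PosDef) :
    (GMinv S Sigma - Real.sqrt (lmin Sigma) • (msqrt S)⁻¹).PosSemidef := by
  set R := msqrt S with hRdef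
  have hRpd : R.PosDef := msqrt_posDef hS
  have hR : R.PosSemidef := hRpd.posSemidef
  have hRR : R * R = S := by rw [hRdef, msqrt_eq hS.posSemidef, PosSemidef.sqrt_mul_self]
  set c := lmin Sigma with hcdef
  have hc0 : 0 ≤ c := lmin_nonneg hSg.posSemidef
  have hM : (R * Sigma * R).PosSemidef := conj_psd hSg.posSemidef hR.1
  have h1 : (Sigma - c • 1).PosSemidef := loewner_lower hSg.1 (lmin_le hSg.1)
  have h2 : (R * Sigma * R - c • S).PosSemidef := by
    have h2' := conj_psd h1 hR.1
    have he : R * (Sigma - c • 1) * R = R * Sigma * R - c • S := by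
      rw [Matrix.mul_sub, Matrix.sub_mul, Matrix.mul_smul, mul_one, Matrix.smul_mul, hRR]
    rwa [he] at h2'
  have hcS : (c • S).PosSemidef := psd_smul hc0 hS.posSemidef
  have h3 : (hM.sqrt - hcS.sqrt).PosSemidef := sqrt_mono hcS hM h2
  have h4 : hcS.sqrt = Real.sqrt c • R := by
    rw [← msqrt_eq hcS, msqrt_smul_s12 hc0 hS.posSemidef]
  have h5 : (msqrt (R * Sigma * R) - Real.sqrt c • R).PosSemidef := by
    rwa [msqrt_eq hM, ← h4]
  have hRinv : (R⁻¹).IsHermitian := hR.1.inv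
  have h6 := conj_psd h5 hRinv
  have hu : IsUnit R.det := hRpd.det_pos.ne'.isUnit
  have he : R⁻¹ * (msqrt (R * Sigma * R) - Real.sqrt c • R) * R⁻¹
      = GMinv S Sigma - Real.sqrt c • R⁻¹ := by
    rw [GMinv, ← hRdef]
    rw [Matrix.mul_sub, Matrix.sub_mul, Matrix.mul_smul, Matrix.smul_mul,
      Matrix.nonsing_inv_mul R hu, Matrix.one_mul]
  rwa [he] at h6

lemma GM_upper (hS : S.PosDef) (hSg : Sigma.PosDef) :
    (Real.sqrt (lmax Sigma) • (msqrt S)⁻¹ - GMinv S Sigma).PosSemidef := by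
  set R := msqrt S with hRdef
  have hRpd : R.PosDef := msqrt_posDef hS
  have hR : R.PosSemidef := hRpd.posSemidef
  have hRR : R * R = S := by rw [hRdef, msqrt_eq hS.posSemidef, PosSemidef.sqrt_mul_self]
  set c := lmax Sigma with hcdef
  have hc0 : 0 ≤ c := lmax_nonneg hSg.posSemidef
  have hM : (R * Sigma * R).PosSemidef := conj_psd hSg.posSemidef hR.1
  have h1 : (c • 1 - Sigma).PosSemidef := loewner_upper hSg.1 (le_lmax hSg.1)
  have h2 : (c • S - R * Sigma * R).PosSemidef := by
    have h2' := conj_psd h1 hR.1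
    have he : R * (c • 1 - Sigma) * R = c • S - R * Sigma * R := by
      rw [Matrix.mul_sub, Matrix.sub_mul, Matrix.mul_smul, mul_one, Matrix.smul_mul, hRR]
    rwa [he] at h2'
  have hcS : (c • S).PosSemidef := psd_smul hc0 hS.posSemidef
  have h3 : (hcS.sqrt - hM.sqrt).PosSemidef := sqrt_mono hM hcS h2
  have h4 : hcS.sqrt = Real.sqrt c • R := by
    rw [← msqrt_eq hcS, msqrt_smul_s12 hc0 hS.posSemidef]
  have h5 : (Real.sqrt c • R - msqrt (R * Sigma * R)).PosSemidef := by
    rwa [msqrt_eq hM, ← h4]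
  have hRinv : (R⁻¹).IsHermitian := hR.1.inv
  have h6 := conj_psd h5 hRinv
  have hu : IsUnit R.det := hRpd.det_pos.ne'.isUnit
  have he : R⁻¹ * (Real.sqrt c • R - msqrt (R * Sigma * R)) * R⁻¹
      = Real.sqrt c • R⁻¹ - GMinv S Sigma := by
    rw [GMinv, ← hRdef]
    rw [Matrix.mul_sub, Matrix.sub_mul, Matrix.mul_smul, Matrix.smul_mul,
      Matrix.nonsing_inv_mul R hu, Matrix.one_mul]
  rwa [he] at h6

end Aux

/-- under the pairwise (stricter) spectral dominance condition, each
pairwise stochastic combination `μ₊ GM(S⁻¹, Σᵢ) − μ₋ GM(S⁻¹, Σⱼ)` is positive definite. -/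
theorem stmt12 {d n : ℕ} (Sig : Fin n → Matrix (Fin d) (Fin d) ℝ)
    (lam : Fin n → ℝ) (hSig : ∀ k, (Sig k).PosDef) (hsum : ∑ k, lam k = 1)
    (hI : (Finset.univ.filter (fun k => 0 < lam k)).Nonempty)
    (hJ : (Finset.univ.filter (fun k => lam k < 0)).Nonempty)
    (μp μm : ℝ)
    (hμp : μp = ∑ i ∈ Finset.univ.filter (fun k => 0 < lam k), lam i)
    (hμm : μm = ∑ j ∈ Finset.univ.filter (fun k => lam k < 0), -lam j)
    (hcond : μm * ((Finset.univ.filter (fun k => lam k < 0)).sup' hJ fun j => Real.sqrt (lmax (Sig j)))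
      < μp * ((Finset.univ.filter (fun k => 0 < lam k)).inf' hI fun i => Real.sqrt (lmin (Sig i)))) :
    ∀ S : Matrix (Fin d) (Fin d) ℝ, S.PosDef →
      ∀ i ∈ Finset.univ.filter (fun k => 0 < lam k), ∀ j ∈ Finset.univ.filter (fun k => lam k < 0),
        (μp • GMinv S (Sig i) - μm • GMinv S (Sig j)).PosDef := by
  intro S hS i hi j hj
  have hi' : 0 < lam i := (Finset.mem_filter.mp hi).2
  have hj' : lam j < 0 := (Finset.mem_filter.mp hj).2
  have hμppos : 0 < μp := by
    rw [hμp]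
    exact Finset.sum_pos (fun k hk => (Finset.mem_filter.mp hk).2) hI
  have hμmpos : 0 < μm := by
    rw [hμm]
    exact Finset.sum_pos (fun k hk => neg_pos.mpr (Finset.mem_filter.mp hk).2) hJ
  have hc : μm * Real.sqrt (lmax (Sig j)) < μp * Real.sqrt (lmin (Sig i)) :=
    calc μm * Real.sqrt (lmax (Sig j))
        ≤ μm * ((Finset.univ.filter (fun k => lam k < 0)).sup' hJ
            fun j => Real.sqrt (lmax (Sig j))) :=
          mul_le_mul_of_nonneg_left (Finset.le_sup' (fun k => Real.sqrt (lmax (Sig k))) hj) hμmpos.le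
      _ < μp * ((Finset.univ.filter (fun k => 0 < lam k)).inf' hI
            fun i => Real.sqrt (lmin (Sig i))) := hcond
      _ ≤ μp * Real.sqrt (lmin (Sig i)) :=
          mul_le_mul_of_nonneg_left (Finset.inf'_le (fun k => Real.sqrt (lmin (Sig k))) hi) hμppos.le
  set T := (msqrt S)⁻¹ with hTdef
  have hT : T.PosDef := (msqrt_posDef hS).inv
  have B1 := GM_lower hS (hSig i)
  have B2 := GM_upper hS (hSig j)
  have key : μp • GMinv S (Sig i) - μm • GMinv S (Sig j)
      = (μp • (GMinv S (Sig i) - Real.sqrt (lmin (Sig i)) • T)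
          + μm • (Real.sqrt (lmax (Sig j)) • T - GMinv S (Sig j)))
        + (μp * Real.sqrt (lmin (Sig i)) - μm * Real.sqrt (lmax (Sig j))) • T := by
    module
  rw [key]
  exact Matrix.PosDef.posSemidef_add ((psd_smul hμppos.le B1).add (psd_smul hμmpos.le B2))
    (pd_smul (by linarith) hT)
end
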